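/- Let H¹₁₁, H¹₁₂, H²₂₁, H²₂₂, K₁, K₂ be real constants and ω > 0, and assume Assumption 1: |H¹₁₂K₂| < |H¹₁₁K₁|, |H²₂₁K₁| < |H²₂₂K₂|, H¹₁₁K₁ < 0 and H²₂₂K₂ < 0. Set α₁ = |H¹₁₁K₁| − |H¹₁₂K₂|, α₂ = |H²₂₂K₂| − |H²₂₁K₁| and α₀ = min(α₁, α₂). Then for every (x₁, x₂) ∈ ℝ²: 2x₁·(1/ω)(H¹₁₁K₁ sgn(x₁) + H¹₁₂K₂ sgn(x₂)) + 2x₂·(1/ω)(H²₂₁K₁ sgn(x₁) + H²₂₂K₂ sgn(x₂)) ≤ −(2α₀/ω)(|x₁| + |x₂|) ≤ −(2α₀/ω)·√(x₁² + x₂²). In particular, along any solution of the average closed-loop system dĜ₁/dt = (1/ω)(H¹₁₁K₁ sgn(Ĝ₁) + H¹₁₂K₂ sgn(Ĝ₂)), dĜ₂/dt = (1/ω)(H²₂₁K₁ sgn(Ĝ₁) + H²₂₂K₂ sgn(Ĝ₂)), the Lyapunov function V = Ĝ₁² + Ĝ₂² satisfies dV/dt ≤ −(2α₀/ω)√V.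 -/
import Mathlib


open Real

lemma self_mul_sign' (x : ℝ) : x * Real.sign x = |x| := by
  rcases lt_trichotomy x 0 with h | h | h
  · rw [Real.sign_of_neg h, abs_of_neg h]; ring
  · simp [h]
  · rw [Real.sign_of_pos h, abs_of_pos h]; ring

lemma abs_sign_le (y : ℝ) : |Real.sign y| ≤ 1 := by
  rcases lt_trichotomy y 0 with h | h | h <;>
    simp [Real.sign_of_neg, Real.sign_of_pos, h, le_of_lt]

lemma mul_sign_le (b x y : ℝ) : b * (x * Real.sign y) ≤ |b| * |x| := by
  calc b * (x * Real.sign y) ≤ |b * (x * Real.sign y)| := le_abs_self _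
    _ = |b| * (|x| * |Real.sign y|) := by rw [abs_mul, abs_mul]
    _ ≤ |b| * (|x| * 1) := by
        have := abs_sign_le y
        have := abs_nonneg b
        have := abs_nonneg x
        gcongr
    _ = |b| * |x| := by ring

/-- under Assumption 1 (strict diagonal dominance of `HK` with negative
diagonal), the pointwise Lyapunov inequality holds, and along any solution of the average
closed-loop system the Lyapunov function `V = Ĝ₁² + Ĝ₂²` satisfies
`dV/dt ≤ −(2α₀/ω)√V`. -/
theorem lyapunov_inequality_average_system
    (H111 H112 H221 H222 K1 K2 ω : ℝ) (hω : 0 < ω)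
    (hdd1 : |H112 * K2| < |H111 * K1|) (hdd2 : |H221 * K1| < |H222 * K2|)
    (hneg1 : H111 * K1 < 0) (hneg2 : H222 * K2 < 0)
    (α1 α2 α0 : ℝ)
    (hα1 : α1 = |H111 * K1| - |H112 * K2|) (hα2 : α2 = |H222 * K2| - |H221 * K1|)
    (hα0 : α0 = min α1 α2) :
    (∀ x1 x2 : ℝ,
      2 * x1 * ((1 / ω) * (H111 * K1 * Real.sign x1 + H112 * K2 * Real.sign x2))
        + 2 * x2 * ((1 / ω) * (H221 * K1 * Real.sign x1 + H222 * K2 * Real.sign x2))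
        ≤ -(2 * α0 / ω) * (|x1| + |x2|) ∧
      -(2 * α0 / ω) * (|x1| + |x2|) ≤ -(2 * α0 / ω) * Real.sqrt (x1 ^ 2 + x2 ^ 2)) ∧
    (∀ G1 G2 : ℝ → ℝ, ∀ t : ℝ,
      HasDerivAt G1 ((1 / ω) * (H111 * K1 * Real.sign (G1 t) + H112 * K2 * Real.sign (G2 t))) t →
      HasDerivAt G2 ((1 / ω) * (H221 * K1 * Real.sign (G1 t) + H222 * K2 * Real.sign (G2 t))) t →
      ∃ V' : ℝ, HasDerivAt (fun s => G1 s ^ 2 + G2 s ^ 2) V' t ∧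
        V' ≤ -(2 * α0 / ω) * Real.sqrt (G1 t ^ 2 + G2 t ^ 2)) := by
  have habs1 : |H111 * K1| = -(H111 * K1) := abs_of_neg hneg1
  have habs2 : |H222 * K2| = -(H222 * K2) := abs_of_neg hneg2
  have hα01 : α0 ≤ α1 := hα0 ▸ min_le_left _ _
  have hα02 : α0 ≤ α2 := hα0 ▸ min_le_right _ _
  have hα0pos : 0 < α0 := by
    rw [hα0]
    exact lt_min (by rw [hα1]; linarith) (by rw [hα2]; linarith)
  have hw : (0:ℝ) < 1 / ω := by positivity
  have key : ∀ x1 x2 : ℝ,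
      2 * x1 * ((1 / ω) * (H111 * K1 * Real.sign x1 + H112 * K2 * Real.sign x2))
        + 2 * x2 * ((1 / ω) * (H221 * K1 * Real.sign x1 + H222 * K2 * Real.sign x2))
        ≤ -(2 * α0 / ω) * (|x1| + |x2|) ∧
      -(2 * α0 / ω) * (|x1| + |x2|) ≤ -(2 * α0 / ω) * Real.sqrt (x1 ^ 2 + x2 ^ 2) := by
    intro x1 x2
    constructor
    · have h1 : x1 * Real.sign x1 = |x1| := self_mul_sign' x1
      have h2 : x2 * Real.sign x2 = |x2| := self_mul_sign' x2
      have hb : H112 * K2 * (x1 * Real.sign x2) ≤ |H112 * K2| * |x1| := mul_sign_le _ _ _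
      have hc : H221 * K1 * (x2 * Real.sign x1) ≤ |H221 * K1| * |x2| := mul_sign_le _ _ _
      have hmain : (H111 * K1) * (x1 * Real.sign x1) + H112 * K2 * (x1 * Real.sign x2)
          + H221 * K1 * (x2 * Real.sign x1) + (H222 * K2) * (x2 * Real.sign x2)
          ≤ -α0 * (|x1| + |x2|) := by
        rw [h1, h2]
        have hx1 := abs_nonneg x1
        have hx2 := abs_nonneg x2
        nlinarith [mul_le_mul_of_nonneg_right hα01 hx1, mul_le_mul_of_nonneg_right hα02 hx2]
      calc 2 * x1 * ((1 / ω) * (H111 * K1 * Real.sign x1 + H112 * K2 * Real.sign x2))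
            + 2 * x2 * ((1 / ω) * (H221 * K1 * Real.sign x1 + H222 * K2 * Real.sign x2))
          = 2 * (1 / ω) * ((H111 * K1) * (x1 * Real.sign x1) + H112 * K2 * (x1 * Real.sign x2)
            + H221 * K1 * (x2 * Real.sign x1) + (H222 * K2) * (x2 * Real.sign x2)) := by ring
        _ ≤ 2 * (1 / ω) * (-α0 * (|x1| + |x2|)) := by
            apply mul_le_mul_of_nonneg_left hmain (by positivity)
        _ = -(2 * α0 / ω) * (|x1| + |x2|) := by ring
    · have hsq : Real.sqrt (x1 ^ 2 + x2 ^ 2) ≤ |x1| + |x2| := by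
        rw [show x1 ^ 2 + x2 ^ 2 = |x1| ^ 2 + |x2| ^ 2 by rw [sq_abs, sq_abs]]
        have h := Real.sqrt_le_sqrt (show |x1| ^ 2 + |x2| ^ 2 ≤ (|x1| + |x2|) ^ 2 by
          nlinarith [abs_nonneg x1, abs_nonneg x2])
        calc Real.sqrt (|x1| ^ 2 + |x2| ^ 2) ≤ Real.sqrt ((|x1| + |x2|) ^ 2) := h
          _ = |x1| + |x2| := Real.sqrt_sq (by positivity)
      have hcoef : -(2 * α0 / ω) ≤ 0 := by
        have : 0 < 2 * α0 / ω := by positivity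
        linarith
      exact mul_le_mul_of_nonpos_left hsq hcoef
  refine ⟨key, ?_⟩
  intro G1 G2 t h1 h2
  refine ⟨_, ((h1.pow 2).add (h2.pow 2)), ?_⟩
  have := (key (G1 t) (G2 t)).1.trans (key (G1 t) (G2 t)).2
  calc 2 * G1 t ^ (2-1) * ((1 / ω) * (H111 * K1 * Real.sign (G1 t) + H112 * K2 * Real.sign (G2 t)))
        + 2 * G2 t ^ (2-1) * ((1 / ω) * (H221 * K1 * Real.sign (G1 t) + H222 * K2 * Real.sign (G2 t)))
      = 2 * G1 t * ((1 / ω) * (H111 * K1 * Real.sign (G1 t) + H112 * K2 * Real.sign (G2 t)))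
        + 2 * G2 t * ((1 / ω) * (H221 * K1 * Real.sign (G1 t) + H222 * K2 * Real.sign (G2 t))) := by
        norm_num
    _ ≤ -(2 * α0 / ω) * Real.sqrt (G1 t ^ 2 + G2 t ^ 2) := this
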